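/- Let n be a positive integer and let X and Y be real random variables whose distributions are related by P[−Y ≤ t] = 1 − (P[−X > t])^{1/n} for all t ∈ ℝ. If E[max(0,−Y)] < ∞, then E[(max(0,−X))^n] < ∞. -/

import Mathlib

open MeasureTheory Set
open scoped ENNReal

/-- If `P[-Y ≤ t] = 1 - (P[-X > t])^{1/n}` for all `t` (i.e. the loss `-X` is distributed
like the minimum of `n` independent copies of the loss `-Y`), then integrability of
`max(0,-Y)` implies integrability of `(max(0,-X))^n`. -/
theorem moment_finiteness_of_min_distribution {Ω Ω' : Type*}
    [MeasurableSpace Ω] [MeasurableSpace Ω']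
    (μ : Measure Ω) (ν : Measure Ω') [IsProbabilityMeasure μ] [IsProbabilityMeasure ν]
    (n : ℕ) (hn : 0 < n) (X : Ω → ℝ) (Y : Ω' → ℝ) (hX : Measurable X) (hY : Measurable Y)
    (hrel : ∀ t : ℝ, (ν {ω | - Y ω ≤ t}).toReal
      = 1 - ((μ {ω | t < - X ω}).toReal) ^ ((n : ℝ)⁻¹))
    (hint : Integrable (fun ω => max 0 (- Y ω)) ν) :
    Integrable (fun ω => (max 0 (- X ω)) ^ n) μ := by
  set g : Ω' → ℝ := fun ω => max 0 (-Y ω) with hgdef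
  set f : Ω → ℝ := fun ω => max 0 (-X ω) with hfdef
  have hgm : Measurable g := measurable_const.max hY.neg
  have hfm : Measurable f := measurable_const.max hX.neg
  have hgnn : ∀ ω, 0 ≤ g ω := fun ω => le_max_left _ _
  have hfnn : ∀ ω, 0 ≤ f ω := fun ω => le_max_left _ _
  set G : ENNReal := ∫⁻ ω, ENNReal.ofReal (g ω) ∂ν with hGdef
  have hGfin : G ≠ ∞ := by
    have h2 := hint.hasFiniteIntegral
    rw [hasFiniteIntegral_iff_ofReal (Filter.Eventually.of_forall hgnn)] at h2
    exact h2.ne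
  -- the key measure identity
  have hmeas : ∀ t : ℝ, μ {ω | t < - X ω} = (ν {ω | t < - Y ω}) ^ n := by
    intro t
    have hc : {ω : Ω' | - Y ω ≤ t} = {ω : Ω' | t < - Y ω}ᶜ := by
      ext ω; simp [not_lt]
    have hcompl : (ν {ω | - Y ω ≤ t}).toReal = 1 - (ν {ω | t < - Y ω}).toReal := by
      rw [hc, prob_compl_eq_one_sub (show MeasurableSet {ω : Ω' | t < - Y ω} from measurableSet_lt measurable_const hY.neg),
        ENNReal.toReal_sub_of_le prob_le_one ENNReal.one_ne_top, ENNReal.toReal_one]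
    have key : ((μ {ω | t < - X ω}).toReal) ^ ((n : ℝ)⁻¹) = (ν {ω | t < - Y ω}).toReal := by
      have := hrel t
      rw [hcompl] at this
      linarith
    have h2 : (μ {ω | t < - X ω}).toReal = ((ν {ω | t < - Y ω}).toReal) ^ n := by
      rw [← key, Real.rpow_inv_natCast_pow ENNReal.toReal_nonneg hn.ne']
    rw [← ENNReal.toReal_eq_toReal_iff' (measure_ne_top _ _)
      (by simp [ENNReal.pow_ne_top (measure_ne_top ν _)])]
    rw [h2, ENNReal.toReal_pow]
  -- Markov inequality for g
  have hmarkov : ∀ t : ℝ, 0 < t → ENNReal.ofReal t * ν {ω | t < - Y ω} ≤ G := by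
    intro t ht
    have hsub : ν {ω | t < - Y ω} ≤ ν {ω | ENNReal.ofReal t ≤ ENNReal.ofReal (g ω)} := by
      apply measure_mono
      intro ω hω
      exact ENNReal.ofReal_le_ofReal (le_trans (le_of_lt hω) (le_max_right _ _))
    calc ENNReal.ofReal t * ν {ω | t < - Y ω}
        ≤ ENNReal.ofReal t * ν {ω | ENNReal.ofReal t ≤ ENNReal.ofReal (g ω)} :=
          mul_le_mul_right hsub _
      _ ≤ G := mul_meas_ge_le_lintegral₀ (hgm.ennreal_ofReal.aemeasurable) _
  -- layer cake for g
  have hlayer_g : ∫⁻ t in Ioi (0:ℝ), ν {a | t < g a} = G :=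
    (lintegral_eq_lintegral_meas_lt ν (Filter.Eventually.of_forall hgnn)
      hgm.aemeasurable).symm
  -- layer cake for f^n
  have hnpos : (0:ℝ) < n := by exact_mod_cast hn
  have hlayer_f := lintegral_rpow_eq_lintegral_meas_lt_mul μ
    (Filter.Eventually.of_forall hfnn) hfm.aemeasurable (p := (n:ℝ)) hnpos
  -- pointwise bound on the tail integrand
  have hbound : ∀ t ∈ Ioi (0:ℝ),
      μ {a | t < f a} * ENNReal.ofReal (t ^ ((n:ℝ) - 1)) ≤ G ^ (n-1) * ν {a | t < g a} := by
    intro t ht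
    have htpos : 0 < t := ht
    have hfs : {a | t < f a} = {ω | t < - X ω} := by
      ext a; simp only [hfdef, mem_setOf_eq, lt_max_iff, or_iff_right htpos.asymm]
    have hgs : {a : Ω' | t < g a} = {ω | t < - Y ω} := by
      ext a; simp only [hgdef, mem_setOf_eq, lt_max_iff, or_iff_right htpos.asymm]
    have hrpow : ENNReal.ofReal (t ^ ((n:ℝ) - 1)) = (ENNReal.ofReal t) ^ (n - 1) := by
      have : ((n:ℝ) - 1) = ((n - 1 : ℕ) : ℝ) := by
        rw [Nat.cast_sub hn]; simp
      rw [this, Real.rpow_natCast, ENNReal.ofReal_pow htpos.le]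
    rw [hfs, hgs, hmeas t, hrpow]
    obtain ⟨m, rfl⟩ : ∃ m, n = m + 1 := ⟨n - 1, (Nat.succ_pred_eq_of_pos hn).symm⟩
    simp only [Nat.add_sub_cancel]
    calc ν {ω | t < - Y ω} ^ (m + 1) * ENNReal.ofReal t ^ m
        = (ENNReal.ofReal t * ν {ω | t < - Y ω}) ^ m * ν {ω | t < - Y ω} := by
          rw [pow_succ, mul_pow]; ring
      _ ≤ G ^ m * ν {ω | t < - Y ω} := by
          gcongr
          exact hmarkov t htpos
  -- put it together
  have hfin : ∫⁻ ω, ENNReal.ofReal (f ω ^ n) ∂μ < ∞ := by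
    have hcast : ∀ ω, f ω ^ n = f ω ^ (n:ℝ) := fun ω => (Real.rpow_natCast _ _).symm
    simp_rw [hcast]
    rw [hlayer_f]
    have htail : ∫⁻ t in Ioi (0:ℝ), μ {a | t < f a} * ENNReal.ofReal (t ^ ((n:ℝ) - 1))
        ≤ G ^ (n-1) * G := by
      calc ∫⁻ t in Ioi (0:ℝ), μ {a | t < f a} * ENNReal.ofReal (t ^ ((n:ℝ) - 1))
          ≤ ∫⁻ t in Ioi (0:ℝ), G ^ (n-1) * ν {a | t < g a} := by
            refine lintegral_mono_ae ?_
            filter_upwards [ae_restrict_mem measurableSet_Ioi] with t ht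
            exact hbound t ht
        _ = G ^ (n-1) * ∫⁻ t in Ioi (0:ℝ), ν {a | t < g a} :=
            lintegral_const_mul' _ _ (ENNReal.pow_ne_top hGfin)
        _ = G ^ (n-1) * G := by rw [hlayer_g]
    exact lt_of_le_of_lt (mul_le_mul_right htail _)
      (ENNReal.mul_lt_top (by simp) (ENNReal.mul_lt_top
        (ENNReal.pow_lt_top hGfin.lt_top) hGfin.lt_top))
  refine ⟨(hfm.pow_const n).aestronglyMeasurable, ?_⟩
  rw [hasFiniteIntegral_iff_ofReal (Filter.Eventually.of_forall (fun ω => pow_nonneg (hfnn ω) n))]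
  exact hfin
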